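/- Let R = ℂ⟦X,Y⟧ be the formal power series ring in two variables over ℂ and let k ≥ 1 be an integer. If l, n ∈ R both have zero constant coefficient and l·n = (X + Y^k)·(X − Y^k), then the quotient ℂ-vector space R / Ideal.span {l, n} has dimension k. -/

import Mathlib

open MvPowerSeries

namespace Stmt4Aux

noncomputable section

abbrev R2 : Type := MvPowerSeries (Fin 2) ℂ

/-- The exponent `(a, b)` as a `Fin 2 →₀ ℕ`. -/
def D (a b : ℕ) : Fin 2 →₀ ℕ := Finsupp.single 0 a + Finsupp.single 1 b

@[simp] lemma D_apply0 (a b : ℕ) : D a b 0 = a := by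
  simp [D, Finsupp.single_apply]

@[simp] lemma D_apply1 (a b : ℕ) : D a b 1 = b := by
  simp [D, Finsupp.single_apply]

lemma eq_D (e : Fin 2 →₀ ℕ) : e = D (e 0) (e 1) := by
  ext x
  fin_cases x
  · simpa using (D_apply0 (e 0) (e 1)).symm
  · simpa using (D_apply1 (e 0) (e 1)).symm

lemma single0_le_D (a b : ℕ) : Finsupp.single (0 : Fin 2) 1 ≤ D a b ↔ 1 ≤ a := by
  rw [Finsupp.single_le_iff, D_apply0]

lemma single1_le_D (k a b : ℕ) : Finsupp.single (1 : Fin 2) k ≤ D a b ↔ k ≤ b := by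
  rw [Finsupp.single_le_iff, D_apply1]

lemma D_sub_single0 (a b : ℕ) : D a b - Finsupp.single (0 : Fin 2) 1 = D (a - 1) b := by
  ext x
  rw [Finsupp.tsub_apply]
  fin_cases x
  · simpa using by rw [show ((⟨0, by omega⟩ : Fin 2)) = (0 : Fin 2) from rfl] <;> simp
  · simp [Finsupp.single_apply]

lemma D_sub_single1 (k a b : ℕ) : D a b - Finsupp.single (1 : Fin 2) k = D a (b - k) := by
  ext x
  rw [Finsupp.tsub_apply]
  fin_cases x
  · simp [Finsupp.single_apply]
  · simp [Finsupp.single_apply]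

/-- `X + c·Yᵏ` as a sum of monomials. -/
def fgen (k : ℕ) (c : ℂ) : R2 :=
  monomial (Finsupp.single 0 1) 1 + monomial (Finsupp.single 1 k) c

lemma coeff_fgen_mul (k : ℕ) (c : ℂ) (Q : R2) (a b : ℕ) :
    coeff (D a b) (fgen k c * Q) =
      (if 1 ≤ a then coeff (D (a - 1) b) Q else 0)
        + c * (if k ≤ b then coeff (D a (b - k)) Q else 0) := by
  rw [fgen, add_mul, map_add, coeff_monomial_mul, coeff_monomial_mul]
  congr 1
  · by_cases h : 1 ≤ a
    · rw [if_pos ((single0_le_D a b).2 h), if_pos h, D_sub_single0, one_mul]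
    · rw [if_neg (fun hh => h ((single0_le_D a b).1 hh)), if_neg h]
  · by_cases h : k ≤ b
    · rw [if_pos ((single1_le_D k a b).2 h), if_pos h, D_sub_single1]
    · rw [if_neg (fun hh => h ((single1_le_D k a b).1 hh)), if_neg h, mul_zero]

/-- Coefficients of the quotient in the division of `h` by `X + c·Yᵏ`. -/
def qAux (k : ℕ) (c : ℂ) (h : R2) : ℕ → ℕ → ℂ
  | a, b =>
    coeff (D (a + 1) b) h -
      (if hb : 1 ≤ k ∧ k ≤ b then c * qAux k c h (a + 1) (b - k) else 0)
  termination_by a b => b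
  decreasing_by omega

/-- Division with remainder by `X + c·Yᵏ`; the remainder involves only `Y`. -/
lemma exists_div (k : ℕ) (hk : 1 ≤ k) (c : ℂ) (h : R2) :
    ∃ q r : R2, (∀ e : Fin 2 →₀ ℕ, e 0 ≠ 0 → coeff e r = 0) ∧ h = fgen k c * q + r := by
  set Q : R2 := (fun e => qAux k c h (e 0) (e 1) : (Fin 2 →₀ ℕ) → ℂ) with hQ
  have hQc : ∀ x y : ℕ, coeff (D x y) Q = qAux k c h x y := by
    intro x y
    rw [coeff_apply, hQ]
    simp
  refine ⟨Q, h - fgen k c * Q, ?_, by ring⟩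
  intro e he
  rw [map_sub, eq_D e, coeff_fgen_mul, sub_eq_zero]
  set a := e 0
  set b := e 1
  have ha : 1 ≤ a := by omega
  rw [if_pos ha, hQc]
  rw [qAux]
  have hstep : a - 1 + 1 = a := by omega
  rw [hstep]
  by_cases hb : k ≤ b
  · rw [dif_pos ⟨hk, hb⟩, if_pos hb, hQc]
    ring
  · rw [dif_neg (by omega), if_neg hb]
    ring

lemma yonly_mul {r r' : R2} (hr : ∀ e : Fin 2 →₀ ℕ, e 0 ≠ 0 → coeff e r = 0)
    (hr' : ∀ e : Fin 2 →₀ ℕ, e 0 ≠ 0 → coeff e r' = 0) :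
    ∀ e : Fin 2 →₀ ℕ, e 0 ≠ 0 → coeff e (r * r') = 0 := by
  classical
  intro e he
  rw [coeff_mul]
  apply Finset.sum_eq_zero
  intro p hp
  rw [Finset.HasAntidiagonal.mem_antidiagonal] at hp
  have hadd : p.1 0 + p.2 0 = e 0 := by
    rw [← hp]; simp
  rcases Nat.eq_zero_or_pos (p.1 0) with h0 | h0
  · rw [hr' p.2 (by omega), mul_zero]
  · rw [hr p.1 (by omega), zero_mul]

lemma eq_zero_of_fgen_mul_yonly (k : ℕ) (hk : 1 ≤ k) (c : ℂ) {q : R2}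
    (hq : ∀ e : Fin 2 →₀ ℕ, e 0 ≠ 0 → coeff e (fgen k c * q) = 0) : q = 0 := by
  have key : ∀ b a : ℕ, coeff (D a b) q = 0 := by
    intro b
    induction b using Nat.strong_induction_on with
    | _ b ih =>
      intro a
      have h0 := hq (D (a + 1) b) (by simp)
      rw [coeff_fgen_mul, if_pos (by omega)] at h0
      have hstep : a + 1 - 1 = a := by omega
      rw [hstep] at h0
      by_cases hb : k ≤ b
      · rw [if_pos hb, ih (b - k) (by omega) (a + 1)] at h0
        simpa using h0
      · rw [if_neg hb] at h0
        simpa using h0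
  ext e
  rw [eq_D e]
  simpa using key (e 1) (e 0)

lemma fgen_ne_zero (k : ℕ) (hk : 1 ≤ k) (c : ℂ) : fgen k c ≠ 0 := by
  intro h
  have h1 := congrArg (coeff (Finsupp.single (0 : Fin 2) 1)) h
  rw [fgen, map_add, coeff_monomial_same, coeff_monomial_ne, map_zero] at h1
  · simpa using h1
  · intro hs
    have := congrArg (fun f : Fin 2 →₀ ℕ => f 1) hs
    simp [Finsupp.single_apply] at this
    omega

lemma fgen_not_unit (k : ℕ) (hk : 1 ≤ k) (c : ℂ) : ¬ IsUnit (fgen k c) := by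
  rw [isUnit_iff_constantCoeff]
  have : constantCoeff (fgen k c) = 0 := by
    rw [← coeff_zero_eq_constantCoeff_apply, fgen, map_add, coeff_monomial_ne, coeff_monomial_ne,
      add_zero]
    · intro hs
      have := congrArg (fun f : Fin 2 →₀ ℕ => f 1) hs.symm
      simp [Finsupp.single_apply] at this
      omega
    · intro hs
      have := congrArg (fun f : Fin 2 →₀ ℕ => f 0) hs.symm
      simp [Finsupp.single_apply] at this
  rw [this]
  exact not_isUnit_zero

lemma fgen_prime (k : ℕ) (hk : 1 ≤ k) (c : ℂ) : Prime (fgen k c) := by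
  refine ⟨fgen_ne_zero k hk c, fgen_not_unit k hk c, ?_⟩
  intro a b hdvd
  obtain ⟨w, hw⟩ := hdvd
  obtain ⟨q1, r1, hr1, ha⟩ := exists_div k hk c a
  obtain ⟨q2, r2, hr2, hb⟩ := exists_div k hk c b
  have hfac : r1 * r2 = fgen k c * (w - (fgen k c * q1 * q2 + q1 * r2 + q2 * r1)) := by
    have : a * b = fgen k c * w := hw
    rw [ha, hb] at this
    linear_combination this
  have hw0 : w - (fgen k c * q1 * q2 + q1 * r2 + q2 * r1) = 0 := by
    apply eq_zero_of_fgen_mul_yonly k hk c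
    intro e he
    rw [← hfac]
    exact yonly_mul hr1 hr2 e he
  rw [hw0, mul_zero] at hfac
  rcases mul_eq_zero.mp hfac with h | h
  · left
    rw [ha, h, add_zero]
    exact Dvd.intro q1 rfl
  · right
    rw [hb, h, add_zero]
    exact Dvd.intro q2 rfl

/-- The key splitting: if `l·n = (X+Yᵏ)(X−Yᵏ)` with `l, n` non-units and `X+Yᵏ ∣ l`,
then the ideals agree. -/
lemma span_eq_of_dvd (k : ℕ) (hk : 1 ≤ k) {l n : R2}
    (hn : constantCoeff n = 0)
    (hln : l * n = fgen k 1 * fgen k (-1))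
    (hd : fgen k 1 ∣ l) :
    Ideal.span {l, n} = Ideal.span {fgen k 1, fgen k (-1)} := by
  obtain ⟨u, hu⟩ := hd
  have hf1 : fgen k 1 ≠ 0 := fgen_ne_zero k hk 1
  have hfm : fgen k (-1) ≠ 0 := fgen_ne_zero k hk (-1)
  have hcan : u * n = fgen k (-1) := by
    apply mul_left_cancel₀ hf1
    rw [← mul_assoc, ← hu, hln]
  rcases (fgen_prime k hk (-1)).2.2 u n ⟨1, by rw [hcan, mul_one]⟩ with hdu | hdn
  · -- fgen k (-1) ∣ u leads to n being a unit: contradiction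
    exfalso
    obtain ⟨w, hwu⟩ := hdu
    have : fgen k (-1) * 1 = fgen k (-1) * (w * n) := by
      rw [mul_one, ← mul_assoc, ← hwu, hcan]
    have hwn : w * n = 1 := (mul_left_cancel₀ hfm this).symm
    have : IsUnit n := IsUnit.of_mul_eq_one (a := n) w (by rw [mul_comm]; exact hwn)
    have := (isUnit_iff_constantCoeff.mp this)
    rw [hn] at this
    exact not_isUnit_zero this
  · obtain ⟨v, hv⟩ := hdn
    have huv : u * v = 1 := by
      apply mul_left_cancel₀ hfm
      rw [mul_one, mul_comm u v, ← mul_assoc, ← hv, mul_comm n u, hcan]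
    have hUu : IsUnit u := IsUnit.of_mul_eq_one (a := u) v huv
    have hUv : IsUnit v := IsUnit.of_mul_eq_one (a := v) u (by rw [mul_comm]; exact huv)
    rw [hu, hv]
    rw [show ({fgen k 1 * u, fgen k (-1) * v} : Set R2)
        = insert (fgen k 1 * u) {fgen k (-1) * v} from rfl,
      Ideal.span_insert,
      show ({fgen k 1, fgen k (-1)} : Set R2) = insert (fgen k 1) {fgen k (-1)} from rfl,
      Ideal.span_insert,
      Ideal.span_singleton_mul_right_unit hUu, Ideal.span_singleton_mul_right_unit hUv]

/-- `⟨X+Yᵏ, X−Yᵏ⟩ = ⟨X, Yᵏ⟩`. -/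
lemma span_fgen_eq (k : ℕ) :
    Ideal.span {fgen k 1, fgen k (-1)} =
      Ideal.span {(monomial (Finsupp.single 0 1) 1 : R2),
        monomial (Finsupp.single 1 k) 1} := by
  have hM1 : (monomial (Finsupp.single (1 : Fin 2) k) (-1) : R2)
      = -(monomial (Finsupp.single 1 k) 1) := by
    rw [← map_neg]
  apply le_antisymm
  · rw [Ideal.span_le]
    rintro x (rfl | rfl)
    · rw [SetLike.mem_coe, Ideal.mem_span_pair]
      exact ⟨1, 1, by rw [fgen, one_mul, one_mul]⟩
    · rw [SetLike.mem_coe, Ideal.mem_span_pair]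
      refine ⟨1, -1, ?_⟩
      rw [fgen, hM1, one_mul]
      ring
  · rw [Ideal.span_le]
    rintro x (rfl | rfl)
    · rw [SetLike.mem_coe, Ideal.mem_span_pair]
      refine ⟨monomial 0 (2⁻¹ : ℂ), monomial 0 (2⁻¹ : ℂ), ?_⟩
      rw [fgen, fgen, hM1, ← mul_add]
      have : (monomial (Finsupp.single (0 : Fin 2) 1) 1 : R2)
            + monomial (Finsupp.single 1 k) 1
            + (monomial (Finsupp.single 0 1) 1 + -monomial (Finsupp.single 1 k) 1)
          = monomial (Finsupp.single 0 1) 2 := by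
        rw [show (2 : ℂ) = 1 + 1 from by norm_num, map_add]
        ring
      rw [this, monomial_mul_monomial, zero_add]
      norm_num
    · rw [SetLike.mem_coe, Ideal.mem_span_pair]
      refine ⟨monomial 0 (2⁻¹ : ℂ), monomial 0 (-2⁻¹ : ℂ), ?_⟩
      rw [fgen, fgen, hM1]
      have hneg : (monomial (0 : Fin 2 →₀ ℕ) (-2⁻¹ : ℂ) : R2)
          = -(monomial 0 (2⁻¹ : ℂ)) := by rw [← map_neg]
      rw [hneg]
      have : (monomial (0 : Fin 2 →₀ ℕ) (2⁻¹ : ℂ) : R2)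
            * (monomial (Finsupp.single 0 1) 1 + monomial (Finsupp.single 1 k) 1)
            + -monomial 0 (2⁻¹ : ℂ)
            * (monomial (Finsupp.single 0 1) 1 + -monomial (Finsupp.single 1 k) 1)
          = monomial (0 : Fin 2 →₀ ℕ) (2⁻¹ : ℂ) * monomial (Finsupp.single 1 k) 2 := by
        rw [show (2 : ℂ) = 1 + 1 from by norm_num, map_add]
        ring
      rw [this, monomial_mul_monomial, zero_add]
      norm_num

/-- The linear functional picking out the coefficients of `Y^j`, `j < k`. -/
def Tmap (k : ℕ) : R2 →ₗ[ℂ] (Fin k → ℂ) :=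
  LinearMap.pi (fun j => coeff (Finsupp.single 1 (j : ℕ)))

lemma Tmap_surjective (k : ℕ) : Function.Surjective (Tmap k) := by
  classical
  intro v
  refine ⟨∑ j : Fin k, monomial (Finsupp.single 1 (j : ℕ)) (v j), ?_⟩
  funext j
  rw [Tmap, LinearMap.pi_apply, map_sum]
  rw [Finset.sum_eq_single j]
  · rw [coeff_monomial_same]
  · intro j' _ hj'
    apply coeff_monomial_ne
    intro hs
    apply hj'
    have := congrArg (fun f : Fin 2 →₀ ℕ => f 1) hs
    simp [Finsupp.single_apply] at this
    exact (Fin.val_injective this).symm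
  · intro hj
    exact absurd (Finset.mem_univ j) hj

lemma single1_eq_D (b : ℕ) : Finsupp.single (1 : Fin 2) b = D 0 b := by
  rw [D, Finsupp.single_zero, zero_add]

lemma ker_Tmap (k : ℕ) (hk : 1 ≤ k) :
    LinearMap.ker (Tmap k) =
      (Ideal.span {(monomial (Finsupp.single 0 1) 1 : R2),
        monomial (Finsupp.single 1 k) 1}).restrictScalars ℂ := by
  ext h
  rw [LinearMap.mem_ker, Submodule.restrictScalars_mem, Ideal.mem_span_pair]
  constructor
  · intro hT
    have hTc : ∀ j : Fin k, coeff (Finsupp.single 1 (j : ℕ)) h = 0 := by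
      intro j
      have := congrFun hT j
      simpa [Tmap] using this
    set A : R2 := (fun e => coeff (D (e 0 + 1) (e 1)) h : (Fin 2 →₀ ℕ) → ℂ) with hA
    set B : R2 := (fun e => if e 0 = 0 then coeff (D 0 (e 1 + k)) h else 0
        : (Fin 2 →₀ ℕ) → ℂ) with hB
    have hAc : ∀ x y : ℕ, coeff (D x y) A = coeff (D (x + 1) y) h := by
      intro x y; rw [coeff_apply, hA]; simp
    have hBc : ∀ x y : ℕ, coeff (D x y) B
        = if x = 0 then coeff (D 0 (y + k)) h else 0 := by
      intro x y; rw [coeff_apply, hB]; simp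
    refine ⟨A, B, ?_⟩
    ext e
    rw [eq_D e]
    set a := e 0
    set b := e 1
    rw [map_add, coeff_mul_monomial, coeff_mul_monomial]
    by_cases ha : 1 ≤ a
    · rw [if_pos ((single0_le_D a b).2 ha), D_sub_single0, hAc, mul_one]
      have hstep : a - 1 + 1 = a := by omega
      rw [hstep]
      by_cases hb : k ≤ b
      · rw [if_pos ((single1_le_D k a b).2 hb), D_sub_single1, hBc, if_neg (by omega), zero_mul,
          add_zero]
      · rw [if_neg (fun hh => hb ((single1_le_D k a b).1 hh)), add_zero]
    · rw [if_neg (fun hh => ha ((single0_le_D a b).1 hh)), zero_add]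
      have ha0 : a = 0 := by omega
      by_cases hb : k ≤ b
      · rw [if_pos ((single1_le_D k a b).2 hb), D_sub_single1, hBc, if_pos ha0, mul_one,
          Nat.sub_add_cancel hb, ha0]
      · rw [if_neg (fun hh => hb ((single1_le_D k a b).1 hh))]
        have := hTc ⟨b, by omega⟩
        rw [single1_eq_D] at this
        rw [ha0, this]
  · rintro ⟨A, B, rfl⟩
    funext j
    rw [Tmap, LinearMap.pi_apply, map_add, coeff_mul_monomial, coeff_mul_monomial]
    rw [if_neg, if_neg]
    · simp
    · rw [Finsupp.single_le_iff, Finsupp.single_apply, if_pos (rfl : (1 : Fin 2) = 1)]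
      exact not_le.mpr j.isLt
    · rw [Finsupp.single_le_iff, Finsupp.single_apply,
        if_neg (show ¬((1 : Fin 2) = 0) by decide)]
      omega

lemma finrank_quot (k : ℕ) (hk : 1 ≤ k) :
    Module.finrank ℂ
      (R2 ⧸ Ideal.span {(monomial (Finsupp.single 0 1) 1 : R2),
        monomial (Finsupp.single 1 k) 1}) = k := by
  set I := Ideal.span {(monomial (Finsupp.single 0 1) 1 : R2),
    monomial (Finsupp.single 1 k) 1}
  have e1 : (R2 ⧸ I.restrictScalars ℂ) ≃ₗ[ℂ] R2 ⧸ I :=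
    Submodule.Quotient.restrictScalarsEquiv ℂ I
  have e2 : (R2 ⧸ LinearMap.ker (Tmap k)) ≃ₗ[ℂ] (Fin k → ℂ) :=
    (Tmap k).quotKerEquivOfSurjective (Tmap_surjective k)
  rw [← e1.finrank_eq, ← ker_Tmap k hk, e2.finrank_eq]
  simp

end

end Stmt4Aux

/-- Theorem 3.14(2), case `A⁻_{2k−1}`: if `l·n = (X + Yᵏ)·(X − Yᵏ)` in `ℂ⟦X,Y⟧`
with `l, n` vanishing at the origin, then `dim_ℂ ℂ⟦X,Y⟧/⟨l,n⟩ = k`. -/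
theorem stmt4 (k : ℕ) (hk : 1 ≤ k)
    (l n : MvPowerSeries (Fin 2) ℂ)
    (hl : constantCoeff l = 0)
    (hn : constantCoeff n = 0)
    (hln : l * n = (X 0 + (X 1) ^ k) * (X 0 - (X 1) ^ k)) :
    Module.finrank ℂ (MvPowerSeries (Fin 2) ℂ ⧸ Ideal.span {l, n}) = k := by
  classical
  have hf1 : (X 0 + (X 1 : MvPowerSeries (Fin 2) ℂ) ^ k) = Stmt4Aux.fgen k 1 := by
    rw [Stmt4Aux.fgen, X_def, X_pow_eq]
  have hfm : (X 0 - (X 1 : MvPowerSeries (Fin 2) ℂ) ^ k) = Stmt4Aux.fgen k (-1) := by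
    rw [Stmt4Aux.fgen, X_def, X_pow_eq, sub_eq_add_neg, ← map_neg]
  rw [hf1, hfm] at hln
  have hprime := Stmt4Aux.fgen_prime k hk 1
  have hdvd : Stmt4Aux.fgen k 1 ∣ l * n := ⟨Stmt4Aux.fgen k (-1), hln⟩
  have hspan : Ideal.span {l, n} = Ideal.span {Stmt4Aux.fgen k 1, Stmt4Aux.fgen k (-1)} := by
    rcases hprime.2.2 l n hdvd with hd | hd
    · exact Stmt4Aux.span_eq_of_dvd k hk hn hln hd
    · rw [Set.pair_comm l n]
      exact Stmt4Aux.span_eq_of_dvd k hk hl (by rw [mul_comm]; exact hln) hd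
  rw [hspan, Stmt4Aux.span_fgen_eq k]
  exact Stmt4Aux.finrank_quot k hk
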